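/- For every admissible pair (v,φ) with v ≥ m > 0 on ℝ, φ : ℝ → [0,π] absolutely continuous with lim_{-∞}φ = 0 and lim_{+∞}φ = π, one has ½∫_ℝ ¼ v² φ'² + (β/4) v⁴ sin²φ dt ≥ (√β/4) m³ ∫_ℝ |sin φ| |φ'| dt ≥ (√β/2) m³, using ∫₀^π sin x dx = 2 and the change of variables formula ∫_ℝ |sin φ| |φ'| dt ≥ |∫_ℝ sin(φ) φ' dt| = ∫₀^π sin x dx. -/

import Mathlib

open MeasureTheory Real Set Filter

theorem amgm_phase_lower_bound (β m : ℝ) (hβ : 0 < β) (hm : 0 < m)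
    (v φ : ℝ → ℝ)
    (hv : Differentiable ℝ v) (hvm : ∀ t, m ≤ v t)
    (hφ : Differentiable ℝ φ) (hφr : ∀ t, φ t ∈ Set.Icc (0:ℝ) Real.pi)
    (hbot : Tendsto φ atBot (nhds 0)) (htop : Tendsto φ atTop (nhds Real.pi))
    (hint : Integrable (fun t => (v t)^2 * (deriv φ t)^2 / 4
      + (β/4) * (v t)^4 * (Real.sin (φ t))^2))
    (hint' : Integrable (fun t => |Real.sin (φ t)| * |deriv φ t|)) :
    (1/2) * (∫ t : ℝ, (v t)^2 * (deriv φ t)^2 / 4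
        + (β/4) * (v t)^4 * (Real.sin (φ t))^2)
      ≥ (Real.sqrt β / 4) * m^3 * ∫ t : ℝ, |Real.sin (φ t)| * |deriv φ t| ∧
    (Real.sqrt β / 4) * m^3 * (∫ t : ℝ, |Real.sin (φ t)| * |deriv φ t|)
      ≥ (Real.sqrt β / 2) * m^3 := by
  have hsβ : 0 < Real.sqrt β := Real.sqrt_pos.mpr hβ
  have hsq : Real.sqrt β * Real.sqrt β = β := Real.mul_self_sqrt hβ.le
  -- Part 1 via pointwise AM-GM
  have hpt : ∀ t, (Real.sqrt β / 2) * m^3 * (|Real.sin (φ t)| * |deriv φ t|)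
      ≤ (v t)^2 * (deriv φ t)^2 / 4 + (β/4) * (v t)^4 * (Real.sin (φ t))^2 := by
    intro t
    obtain ⟨V, hVdef⟩ : ∃ V, v t = V := ⟨_, rfl⟩
    obtain ⟨a, hadef⟩ : ∃ a, |deriv φ t| = a := ⟨_, rfl⟩
    obtain ⟨s, hsdef⟩ : ∃ s, |Real.sin (φ t)| = s := ⟨_, rfl⟩
    have ha2 : (deriv φ t)^2 = a^2 := by rw [← hadef, sq_abs]
    have hs2 : (Real.sin (φ t))^2 = s^2 := by rw [← hsdef, sq_abs]
    have hVm : m ≤ V := hVdef ▸ hvm t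
    have hVpos : 0 < V := lt_of_lt_of_le hm hVm
    have hV3 : m^3 ≤ V^3 := pow_le_pow_left₀ hm.le hVm 3
    have han : 0 ≤ a := hadef ▸ abs_nonneg _
    have hsn : 0 ≤ s := hsdef ▸ abs_nonneg _
    rw [hVdef, hadef, hsdef, ha2, hs2]
    have hrw : β / 4 * V^4 * s^2 = (Real.sqrt β * V^2 * s)^2 / 4 := by
      rw [mul_pow, mul_pow, Real.sq_sqrt hβ.le]; ring
    nlinarith [hrw, sq_nonneg (V * a - Real.sqrt β * V^2 * s),
      mul_nonneg (mul_nonneg hsβ.le (sub_nonneg.mpr hV3)) (mul_nonneg hsn han)]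
  have hI1 : ∫ t : ℝ, (Real.sqrt β / 2) * m^3 * (|Real.sin (φ t)| * |deriv φ t|)
      ≤ ∫ t : ℝ, (v t)^2 * (deriv φ t)^2 / 4 + (β/4) * (v t)^4 * (Real.sin (φ t))^2 :=
    integral_mono (hint'.const_mul _) hint hpt
  have hI1' : (Real.sqrt β / 2) * m^3 * ∫ t : ℝ, |Real.sin (φ t)| * |deriv φ t|
      ≤ ∫ t : ℝ, (v t)^2 * (deriv φ t)^2 / 4 + (β/4) * (v t)^4 * (Real.sin (φ t))^2 := by
    rw [← integral_const_mul]; exact hI1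
  -- Part 2: ∫ sin(φ) φ' = 2
  have hderiv : ∀ t, HasDerivAt (fun t => -Real.cos (φ t))
      (Real.sin (φ t) * deriv φ t) t := by
    intro t
    have h1 : HasDerivAt (fun t => Real.cos (φ t))
        (-Real.sin (φ t) * deriv φ t) t :=
      (Real.hasDerivAt_cos (φ t)).comp t (hφ t).hasDerivAt
    have := h1.neg
    simp only [neg_mul, neg_neg] at this
    exact this
  have hintsin : Integrable (fun t => Real.sin (φ t) * deriv φ t) := by
    refine hint'.mono ?_ (Filter.Eventually.of_forall fun t => ?_)
    · exact ((Real.measurable_sin.comp (hφ.continuous.measurable)).mul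
        (measurable_deriv φ)).aestronglyMeasurable
    · simp [Real.norm_eq_abs, abs_mul, abs_abs]
  have hFbot : Tendsto (fun t => -Real.cos (φ t)) atBot (nhds (-1)) := by
    have : Tendsto (fun t => -Real.cos (φ t)) atBot (nhds (-Real.cos 0)) :=
      ((Real.continuous_cos.tendsto 0).comp hbot).neg
    simpa using this
  have hFtop : Tendsto (fun t => -Real.cos (φ t)) atTop (nhds 1) := by
    have : Tendsto (fun t => -Real.cos (φ t)) atTop (nhds (-Real.cos Real.pi)) :=
      ((Real.continuous_cos.tendsto Real.pi).comp htop).neg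
    simpa using this
  have hFTC : ∫ t : ℝ, Real.sin (φ t) * deriv φ t = 1 - (-1) :=
    MeasureTheory.integral_of_hasDerivAt_of_tendsto hderiv hintsin hFbot hFtop
  have hmono : ∫ t : ℝ, Real.sin (φ t) * deriv φ t
      ≤ ∫ t : ℝ, |Real.sin (φ t)| * |deriv φ t| := by
    refine integral_mono hintsin hint' fun t => ?_
    rw [← abs_mul]
    exact le_abs_self _
  have hI2 : (2:ℝ) ≤ ∫ t : ℝ, |Real.sin (φ t)| * |deriv φ t| := by
    rw [hFTC] at hmono; linarith
  constructor
  · linarith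
  · have h := mul_le_mul_of_nonneg_left hI2
      (by positivity : (0:ℝ) ≤ Real.sqrt β / 4 * m^3)
    linarith
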